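/- Let Φ be the poset of closed subsets of Δ ordered by inclusion, and let c : colim_{α ∈ Φ} GL_n(R)_α → GL_n(R) be the canonical homomorphism induced by the inclusions GL_n(R)_α ≤ GL_n(R) (the colimit taken in the category of groups with structure maps the inclusions GL_n(R)_α ↪ GL_n(R)_β for α ⊆ β). Then the kernel of c is isomorphic to K₂(n,R), the kernel of the homomorphism φ : St_n(R) → GL_n(R) sending x_ij(r) to ε_ij(r). -/

import Mathlib

/-- The elementary matrix `ε_{ij}(r)`. -/
def elemMat {n : ℕ} {R : Type*} [Ring R] (i j : Fin n) (r : R) :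
    Matrix (Fin n) (Fin n) R :=
  1 + Matrix.single i j r

/-- The elementary matrix `ε_{ij}(r)` as a unit (invertible matrix) for `i ≠ j`. -/
def elemUnit {n : ℕ} {R : Type*} [Ring R] (i j : Fin n) (hij : i ≠ j) (r : R) :
    (Matrix (Fin n) (Fin n) R)ˣ where
  val := elemMat i j r
  inv := elemMat i j (-r)
  val_inv := by
    have h0 : Matrix.single i j r * Matrix.single i j (-r) = 0 :=
      Matrix.single_mul_single_of_ne _ _ _ _ hij.symm _
    simp [elemMat, mul_add, add_mul, h0, ← Matrix.single_add, add_assoc]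
  inv_val := by
    have h0 : Matrix.single i j (-r) * Matrix.single i j r = 0 :=
      Matrix.single_mul_single_of_ne _ _ _ _ hij.symm _
    simp [elemMat, mul_add, add_mul, h0, ← Matrix.single_add, add_assoc]

/-- `GL_n(R)_α`. -/
def glSub {n : ℕ} (R : Type*) [Ring R] (α : Set (Fin n × Fin n)) :
    Subgroup (Matrix (Fin n) (Fin n) R)ˣ :=
  Subgroup.closure
    {u | ∃ (i j : Fin n) (hij : i ≠ j) (r : R), (i, j) ∈ α ∧ u = elemUnit i j hij r}

open scoped commutatorElement

/-- The Steinberg relations on the generators `x_{ij}(r)`, `(i,j) ∈ α`, `r ∈ R`. -/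
def stRels (n : ℕ) (R : Type*) [Ring R] (α : Set (Fin n × Fin n))
    (hc : ∀ i j k : Fin n, (i, j) ∈ α → (j, k) ∈ α → i ≠ k → (i, k) ∈ α) :
    Set (FreeGroup ({p : Fin n × Fin n // p ∈ α} × R)) :=
  {w | ∃ (p : {p : Fin n × Fin n // p ∈ α}) (a b : R),
      w = FreeGroup.of (p, a) * FreeGroup.of (p, b) * (FreeGroup.of (p, a + b))⁻¹} ∪
  {w | ∃ (p q : {p : Fin n × Fin n // p ∈ α}) (a b : R),
      p.1.2 ≠ q.1.1 ∧ p.1.1 ≠ q.1.2 ∧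
      w = ⁅FreeGroup.of (p, a), FreeGroup.of (q, b)⁆} ∪
  {w | ∃ (p q : {p : Fin n × Fin n // p ∈ α}) (a b : R) (h : p.1.2 = q.1.1)
      (hil : p.1.1 ≠ q.1.2),
      w = ⁅FreeGroup.of (p, a), FreeGroup.of (q, b)⁆ *
        (FreeGroup.of
          (⟨(p.1.1, q.1.2), hc p.1.1 p.1.2 q.1.2 p.2 (by rw [h]; exact q.2) hil⟩, a * b))⁻¹}

/-- The set `Δ` of all off-diagonal positions. -/
def deltaSet (n : ℕ) : Set (Fin n × Fin n) := {p | p.1 ≠ p.2}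

/-- `α` is a closed subset of the off-diagonal positions. -/
def IsClosedSubset {n : ℕ} (α : Set (Fin n × Fin n)) : Prop :=
  (∀ p ∈ α, p.1 ≠ p.2) ∧ ∀ i j k : Fin n, (i, j) ∈ α → (j, k) ∈ α → (i, k) ∈ α

/-- The Steinberg group `St_n(R)`. -/
abbrev Steinberg (n : ℕ) (R : Type) [Ring R] :=
  PresentedGroup (stRels n R (deltaSet n)
    (fun i _ k _ _ hik => show (i, k) ∈ deltaSet n from hik))

/-! ### Infrastructure -/

open scoped Matrix
set_option maxHeartbeats 1000000
attribute [local instance] Classical.propDecidable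


section MatLemmas
variable {n : ℕ} {R : Type*} [Ring R]


theorem elemMat_mul (i j k l : Fin n) (a b : R) :
    elemMat i j a * elemMat k l b =
      1 + Matrix.single i j a + Matrix.single k l b
        + Matrix.single i j a * Matrix.single k l b := by
  simp only [elemMat, add_mul, mul_add, one_mul, mul_one]
  abel

theorem elemUnit_mul_same (i j : Fin n) (hij : i ≠ j) (a b : R) :
    elemUnit i j hij a * elemUnit i j hij b = elemUnit i j hij (a + b) := by
  apply Units.ext
  show elemMat i j a * elemMat i j b = elemMat i j (a + b)
  have h0 : Matrix.single i j a * Matrix.single i j b = 0 :=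
    Matrix.single_mul_single_of_ne _ _ _ _ hij.symm _
  rw [elemMat_mul, h0, add_zero, elemMat, Matrix.single_add, add_assoc]

theorem elemUnit_zero (i j : Fin n) (hij : i ≠ j) :
    elemUnit i j hij (0 : R) = 1 := by
  apply Units.ext
  show elemMat i j (0 : R) = 1
  simp [elemMat]

theorem elemUnit_comm (i j k l : Fin n) (hij : i ≠ j) (hkl : k ≠ l)
    (hjk : j ≠ k) (hil : i ≠ l) (a b : R) :
    elemUnit i j hij a * elemUnit k l hkl b = elemUnit k l hkl b * elemUnit i j hij a := by
  apply Units.ext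
  show elemMat i j a * elemMat k l b = elemMat k l b * elemMat i j a
  have h0 : Matrix.single i j a * Matrix.single k l b = 0 :=
    Matrix.single_mul_single_of_ne _ _ _ _ hjk _
  have h1 : Matrix.single k l b * Matrix.single i j a = 0 :=
    Matrix.single_mul_single_of_ne _ _ _ _ (Ne.symm hil) _
  rw [elemMat_mul, elemMat_mul, h0, h1]
  abel

theorem elemUnit_comp (i j l : Fin n) (hij : i ≠ j) (hjl : j ≠ l) (hil : i ≠ l) (a b : R) :
    elemUnit i j hij a * elemUnit j l hjl b =
      elemUnit i l hil (a * b) * (elemUnit j l hjl b * elemUnit i j hij a) := by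
  apply Units.ext
  show elemMat i j a * elemMat j l b = elemMat i l (a*b) * (elemMat j l b * elemMat i j a)
  have h0 : Matrix.single i j a * Matrix.single j l b =
      Matrix.single i l (a * b) := Matrix.single_mul_single_same _ _ _ _ _
  have h1 : Matrix.single j l b * Matrix.single i j a = 0 :=
    Matrix.single_mul_single_of_ne _ _ _ _ (Ne.symm hil) _
  have h2 : Matrix.single i l (a*b) * Matrix.single j l b = 0 :=
    Matrix.single_mul_single_of_ne _ _ _ _ (Ne.symm hjl) _
  have h3 : Matrix.single i l (a*b) * Matrix.single i j a = 0 :=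
    Matrix.single_mul_single_of_ne _ _ _ _ (Ne.symm hil) _
  simp only [elemMat, mul_add, add_mul, one_mul, mul_one, h0, h1, h2, h3, add_zero,
    mul_zero, zero_mul]
  abel

end MatLemmas

theorem mk_rel {γ : Type*} {rels : Set (FreeGroup γ)} {w : FreeGroup γ} (h : w ∈ rels) :
    PresentedGroup.mk rels w = 1 :=
  (QuotientGroup.eq_one_iff w).2 (Subgroup.subset_normalClosure h)

variable {n : ℕ} {R : Type} [Ring R]

theorem elemUnit_mem {α : Set (Fin n × Fin n)} {i j : Fin n} (hij : i ≠ j) (r : R)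
    (h : (i, j) ∈ α) : elemUnit i j hij r ∈ glSub R α :=
  Subgroup.subset_closure ⟨i, j, hij, r, h, rfl⟩

/-- The map between Steinberg-type presented groups induced by an inclusion `α ⊆ β`. -/
def stMap {α β : Set (Fin n × Fin n)}
    (hcα : ∀ i j k : Fin n, (i, j) ∈ α → (j, k) ∈ α → i ≠ k → (i, k) ∈ α)
    (hcβ : ∀ i j k : Fin n, (i, j) ∈ β → (j, k) ∈ β → i ≠ k → (i, k) ∈ β)
    (hsub : α ⊆ β) :
    PresentedGroup (stRels n R α hcα) →* PresentedGroup (stRels n R β hcβ) :=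
  PresentedGroup.toGroup
    (f := fun g => PresentedGroup.of (⟨g.1.1, hsub g.1.2⟩, g.2)) (by
      rintro w (( ⟨p, a, b, rfl⟩ | ⟨p, q, a, b, h1, h2, rfl⟩ ) | ⟨p, q, a, b, h1, h2, rfl⟩)
      · have := mk_rel (rels := stRels n R β hcβ)
          (Or.inl (Or.inl ⟨⟨p.1, hsub p.2⟩, a, b, rfl⟩))
        simpa only [map_mul, map_inv, FreeGroup.lift_apply_of, PresentedGroup.of] using this
      · have := mk_rel (rels := stRels n R β hcβ)
          (Or.inl (Or.inr ⟨⟨p.1, hsub p.2⟩, ⟨q.1, hsub q.2⟩, a, b, h1, h2, rfl⟩))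
        simpa only [map_mul, map_inv, map_commutatorElement, FreeGroup.lift_apply_of, PresentedGroup.of] using this
      · have := mk_rel (rels := stRels n R β hcβ)
          (Or.inr ⟨⟨p.1, hsub p.2⟩, ⟨q.1, hsub q.2⟩, a, b, h1, h2, rfl⟩)
        simpa only [map_mul, map_inv, map_commutatorElement, FreeGroup.lift_apply_of, PresentedGroup.of] using this)

@[simp] theorem stMap_of {α β : Set (Fin n × Fin n)} {hcα} {hcβ} (hsub : α ⊆ β)
    (p : {p : Fin n × Fin n // p ∈ α}) (r : R) :
    stMap (n := n) (R := R) hcα hcβ hsub (PresentedGroup.of (p, r)) =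
      PresentedGroup.of (⟨p.1, hsub p.2⟩, r) :=
  PresentedGroup.toGroup.of _

theorem commutator_eq_of_eq {G : Type*} [Group G] {u v w : G} (h : u * v = w * (v * u)) :
    ⁅u, v⁆ = w := by
  rw [commutatorElement_def, h]
  group

/-- `φ̂_α : St(α) →* GL_n(R)_α`. -/
def phiHat (α : Set (Fin n × Fin n))
    (hod : ∀ p ∈ α, p.1 ≠ p.2)
    (hcα : ∀ i j k : Fin n, (i, j) ∈ α → (j, k) ∈ α → i ≠ k → (i, k) ∈ α) :
    PresentedGroup (stRels n R α hcα) →* glSub R α :=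
  PresentedGroup.toGroup
    (f := fun g => ⟨elemUnit g.1.1.1 g.1.1.2 (hod _ g.1.2) g.2, elemUnit_mem _ _ g.1.2⟩) (by
      rintro w (( ⟨⟨⟨i,j⟩,hp⟩, a, b, rfl⟩ | ⟨⟨⟨i,j⟩,hp⟩, ⟨⟨k,l⟩,hq⟩, a, b, h1, h2, rfl⟩ ) |
        ⟨⟨⟨i,j⟩,hp⟩, ⟨⟨j',l⟩,hq⟩, a, b, h1, h2, rfl⟩)
      · apply Subtype.ext
        simp only [map_mul, map_inv, FreeGroup.lift_apply_of, Subgroup.coe_mul, Subgroup.coe_inv,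
          OneMemClass.coe_one]
        rw [elemUnit_mul_same]
        group
      · apply Subtype.ext
        simp only [map_commutatorElement, map_mul, map_inv, FreeGroup.lift_apply_of,
          commutatorElement_def, Subgroup.coe_mul, Subgroup.coe_inv, OneMemClass.coe_one]
        rw [elemUnit_comm i j k l (hod _ hp) (hod _ hq) h1 h2]
        group
      · simp only at h1
        subst h1
        apply Subtype.ext
        simp only [map_commutatorElement, map_mul, map_inv, FreeGroup.lift_apply_of,
          commutatorElement_def, Subgroup.coe_mul, Subgroup.coe_inv, OneMemClass.coe_one]
        rw [elemUnit_comp i j l (hod _ hp) (hod _ hq) h2]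
        group)

@[simp] theorem phiHat_of {α : Set (Fin n × Fin n)} (hod : ∀ p ∈ α, p.1 ≠ p.2) {hcα}
    (p : {p : Fin n × Fin n // p ∈ α}) (r : R) :
    (phiHat α hod hcα (PresentedGroup.of (p, r))).val =
      elemUnit p.1.1 p.1.2 (hod _ p.2) r := by
  rw [phiHat, PresentedGroup.toGroup.of]

theorem glSub_le {α : Set (Fin n × Fin n)} {K : Subgroup (Matrix (Fin n) (Fin n) R)ˣ}
    (h : ∀ (i j : Fin n) (hij : i ≠ j) (r : R), (i, j) ∈ α → elemUnit i j hij r ∈ K) :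
    glSub R α ≤ K := by
  have : {u | ∃ (i j : Fin n) (hij : i ≠ j) (r : R), (i, j) ∈ α ∧ u = elemUnit i j hij r} ⊆ K := by
    rintro u ⟨i, j, hij, r, hmem, rfl⟩
    exact h i j hij r hmem
  exact (Subgroup.closure_le K).2 this

theorem phiHat_surjective (α : Set (Fin n × Fin n)) (hod : ∀ p ∈ α, p.1 ≠ p.2) (hcα) :
    Function.Surjective (phiHat (n := n) (R := R) α hod hcα) := by
  intro x
  have hx : x.val ∈ Subgroup.map (glSub R α).subtype (phiHat α hod hcα).range := by
    refine glSub_le (fun i j hij r hmem => ?_) x.2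
    refine ⟨phiHat α hod hcα (PresentedGroup.of (⟨(i,j), hmem⟩, r)), ⟨_, rfl⟩, ?_⟩
    exact phiHat_of (hcα := hcα) hod ⟨(i,j), hmem⟩ r
  obtain ⟨y, ⟨s, rfl⟩, hy⟩ := hx
  exact ⟨s, Subtype.ext hy⟩

/-! ### Relations inside the presented group -/

section Rels
variable {α : Set (Fin n × Fin n)}
  {hcα : ∀ i j k : Fin n, (i, j) ∈ α → (j, k) ∈ α → i ≠ k → (i, k) ∈ α}

theorem st_add (p : {p : Fin n × Fin n // p ∈ α}) (a b : R) :
    (PresentedGroup.of (rels := stRels n R α hcα) (p, a)) * PresentedGroup.of (p, b) =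
      PresentedGroup.of (p, a + b) := by
  have := mk_rel (rels := stRels n R α hcα) (Or.inl (Or.inl ⟨p, a, b, rfl⟩))
  simp only [map_mul, map_inv] at this
  rw [mul_inv_eq_one] at this
  exact this

theorem st_zero (p : {p : Fin n × Fin n // p ∈ α}) :
    (PresentedGroup.of (rels := stRels n R α hcα) (p, (0 : R))) = 1 := by
  have := st_add (hcα := hcα) p (0 : R) 0
  rw [add_zero] at this
  exact right_eq_mul.mp this.symm

theorem st_inv (p : {p : Fin n × Fin n // p ∈ α}) (a : R) :
    (PresentedGroup.of (rels := stRels n R α hcα) (p, a))⁻¹ = PresentedGroup.of (p, -a) := by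
  symm
  rw [eq_inv_iff_mul_eq_one, st_add, neg_add_cancel, st_zero]

theorem st_comm (p q : {p : Fin n × Fin n // p ∈ α}) (h1 : p.1.2 ≠ q.1.1)
    (h2 : p.1.1 ≠ q.1.2) (a b : R) :
    Commute (PresentedGroup.of (rels := stRels n R α hcα) (p, a)) (PresentedGroup.of (q, b)) := by
  have := mk_rel (rels := stRels n R α hcα) (Or.inl (Or.inr ⟨p, q, a, b, h1, h2, rfl⟩))
  simp only [map_commutatorElement] at this
  exact commutatorElement_eq_one_iff_mul_comm.mp this

theorem st_conj (p q : {p : Fin n × Fin n // p ∈ α}) (h1 : p.1.2 = q.1.1)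
    (h2 : p.1.1 ≠ q.1.2) (a b : R) :
    (PresentedGroup.of (rels := stRels n R α hcα) (p, a)) * PresentedGroup.of (q, b) *
        (PresentedGroup.of (p, a))⁻¹ =
      PresentedGroup.of (⟨(p.1.1, q.1.2),
          hcα p.1.1 p.1.2 q.1.2 p.2 (by rw [h1]; exact q.2) h2⟩, a * b) *
        PresentedGroup.of (q, b) := by
  have := mk_rel (rels := stRels n R α hcα) (Or.inr ⟨p, q, a, b, h1, h2, rfl⟩)
  have hof : ∀ x, PresentedGroup.mk (stRels n R α hcα) (FreeGroup.of x) = PresentedGroup.of x :=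
    fun _ => rfl
  simp only [map_mul, map_inv, map_commutatorElement, hof] at this
  rw [mul_inv_eq_one, commutatorElement_def] at this
  calc (PresentedGroup.of (rels := stRels n R α hcα) (p, a)) * PresentedGroup.of (q, b) *
        (PresentedGroup.of (p, a))⁻¹
      = (PresentedGroup.of (rels := stRels n R α hcα) (p, a)) * PresentedGroup.of (q, b) *
        (PresentedGroup.of (p, a))⁻¹ * (PresentedGroup.of (q, b))⁻¹ *
        PresentedGroup.of (q, b) := by group
    _ = _ := by rw [this]

end Rels

/-! ### Column-fixing invariant -/

theorem glSub_fix_col {α : Set (Fin n × Fin n)} {m : Fin n} (hm : ∀ p ∈ α, p.2 ≠ m)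
    {u : (Matrix (Fin n) (Fin n) R)ˣ} (hu : u ∈ glSub R α) :
    u.val *ᵥ Pi.single m 1 = Pi.single m 1 := by
  induction hu using Subgroup.closure_induction with
  | mem g hg =>
    obtain ⟨i, j, hij, r, hmem, rfl⟩ := hg
    have hjm : j ≠ m := hm _ hmem
    show elemMat i j r *ᵥ Pi.single m 1 = Pi.single m 1
    rw [elemMat, Matrix.add_mulVec, Matrix.one_mulVec, Matrix.mulVec_single]
    have : MulOpposite.op (1 : R) • (Matrix.single i j r).col m = 0 := by
      funext i'
      simp [Matrix.single_apply, hjm]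
    rw [this]
    funext i'
    simp
  | one => rw [Units.val_one, Matrix.one_mulVec]
  | mul x y hx hy px py =>
    rw [Units.val_mul, ← Matrix.mulVec_mulVec, py, px]
  | inv x hx px =>
    conv_lhs => rw [← px]
    rw [Matrix.mulVec_mulVec, ← Units.val_mul, inv_mul_cancel, Units.val_one,
      Matrix.one_mulVec]

/-! ### The column subgroup -/

section Xp

variable {α : Set (Fin n × Fin n)}
  {hcα : ∀ i j k : Fin n, (i, j) ∈ α → (j, k) ∈ α → i ≠ k → (i, k) ∈ α}
  (hod : ∀ p ∈ α, p.1 ≠ p.2) (m : Fin n)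

include hod

theorem xcomm_all (f g : {i : Fin n // (i, m) ∈ α} → R) (i i' : {i : Fin n // (i, m) ∈ α}) :
    Commute (PresentedGroup.of (rels := stRels n R α hcα) (⟨(i.1, m), i.2⟩, f i))
      (PresentedGroup.of (⟨(i'.1, m), i'.2⟩, g i')) :=
  st_comm ⟨(i.1, m), i.2⟩ ⟨(i'.1, m), i'.2⟩ (Ne.symm (hod _ i'.2)) (hod _ i.2) (f i) (g i')

/-- The canonical product of column generators. -/
noncomputable def Xprod (v : {i : Fin n // (i, m) ∈ α} → R) :
    PresentedGroup (stRels n R α hcα) :=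
  Finset.univ.noncommProd (fun i => PresentedGroup.of (⟨(i.1, m), i.2⟩, v i))
    (fun i _ i' _ _ => xcomm_all hod m v v i i')

theorem Xprod_mul (v w : {i : Fin n // (i, m) ∈ α} → R) :
    Xprod (hcα := hcα) hod m v * Xprod hod m w = Xprod hod m (v + w) := by
  rw [Xprod, Xprod, Xprod, ← Finset.noncommProd_mul_distrib _ _
    (fun i _ i' _ _ => xcomm_all hod m v v i i')
    (fun i _ i' _ _ => xcomm_all hod m w w i i')
    (fun i _ i' _ _ => xcomm_all hod m w v i i')]
  exact Finset.noncommProd_congr rfl (fun x _ => st_add _ _ _) _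

theorem Xprod_zero :
    Xprod (hcα := hcα) hod m (0 : {i : Fin n // (i, m) ∈ α} → R) = 1 := by
  have h : Xprod (hcα := hcα) hod m (0 : {i : Fin n // (i, m) ∈ α} → R) * Xprod hod m 0 =
      Xprod hod m (0 + 0) :=
    Xprod_mul hod m 0 0
  rw [add_zero] at h
  exact right_eq_mul.mp h.symm

theorem Xprod_inv (v : {i : Fin n // (i, m) ∈ α} → R) :
    (Xprod (hcα := hcα) hod m v)⁻¹ = Xprod hod m (-v) := by
  symm
  rw [eq_inv_iff_mul_eq_one, Xprod_mul, neg_add_cancel, Xprod_zero]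

theorem Xprod_single [DecidableEq {i : Fin n // (i, m) ∈ α}]
    (i : {i : Fin n // (i, m) ∈ α}) (r : R) :
    PresentedGroup.of (rels := stRels n R α hcα) (⟨(i.1, m), i.2⟩, r) =
      Xprod hod m (Pi.single i r) := by
  erw [Xprod, ← Finset.insert_erase (Finset.mem_univ i),
    Finset.noncommProd_insert_of_notMem _ _ _ _ (Finset.notMem_erase i _)]
  have h2 : (Finset.univ.erase i).noncommProd
      (fun i' => PresentedGroup.of (rels := stRels n R α hcα)
        (⟨(i'.1, m), i'.2⟩, Pi.single (M := fun _ => R) i r i'))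
      (fun a _ b _ _ => xcomm_all hod m _ _ a b) = 1 := by
    refine Finset.noncommProd_induction _ _ _ (fun x => x = 1)
      (fun a b ha hb => by rw [ha, hb, mul_one]) rfl (fun x hx => ?_)
    rw [Pi.single_eq_of_ne (Finset.ne_of_mem_erase hx)]
    exact st_zero _
  rw [h2, mul_one, Pi.single_eq_same]

theorem mem_X_iff {x : PresentedGroup (stRels n R α hcα)}
    (hx : x ∈ Subgroup.closure
      {g | ∃ (i : Fin n) (h : (i, m) ∈ α) (r : R),
        g = PresentedGroup.of (rels := stRels n R α hcα) (⟨(i, m), h⟩, r)}) :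
    ∃ v, x = Xprod (hcα := hcα) hod m v := by
  classical
  induction hx using Subgroup.closure_induction with
  | mem g hg =>
    obtain ⟨i, h, r, rfl⟩ := hg
    exact ⟨Pi.single ⟨i, h⟩ r, Xprod_single hod m ⟨i, h⟩ r⟩
  | one => exact ⟨0, (Xprod_zero hod m).symm⟩
  | mul x y hx hy px py =>
    obtain ⟨v, rfl⟩ := px
    obtain ⟨w, rfl⟩ := py
    exact ⟨v + w, Xprod_mul hod m v w⟩
  | inv x hx px =>
    obtain ⟨v, rfl⟩ := px
    exact ⟨-v, Xprod_inv hod m v⟩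

omit hod in
theorem elemMat_commute_col (i i' m' : Fin n) (him : i ≠ m') (him' : i' ≠ m') (a b : R) :
    Commute (elemMat i m' a) (elemMat i' m' b) := by
  have h0 : Matrix.single i m' a * Matrix.single i' m' b = 0 :=
    Matrix.single_mul_single_of_ne _ _ _ _ (Ne.symm him') _
  have h1 : Matrix.single i' m' b * Matrix.single i m' a = 0 :=
    Matrix.single_mul_single_of_ne _ _ _ _ (Ne.symm him) _
  show _ = _
  rw [elemMat_mul, elemMat_mul, h0, h1]
  abel

theorem noncommProd_elemMat (v : {i : Fin n // (i, m) ∈ α} → R)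
    (s : Finset {i : Fin n // (i, m) ∈ α}) :
    s.noncommProd (fun i => elemMat i.1 m (v i))
        (fun i _ i' _ _ => elemMat_commute_col i.1 i'.1 m (hod _ i.2) (hod _ i'.2) _ _) =
      1 + ∑ i ∈ s, Matrix.single i.1 m (v i) := by
  classical
  induction s using Finset.cons_induction with
  | empty => exact (Finset.noncommProd_empty _ _).trans (by simp)
  | cons a s ha ih =>
    erw [Finset.noncommProd_cons, ih, Finset.sum_cons]
    have h0 : Matrix.single a.1 m (v a) *
        ∑ i ∈ s, Matrix.single i.1 m (v i) = 0 := by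
      rw [Finset.mul_sum]
      exact Finset.sum_eq_zero fun i _ =>
        Matrix.single_mul_single_of_ne _ _ _ _ (Ne.symm (hod _ i.2)) _
    rw [elemMat, add_mul, one_mul, mul_add, mul_one, h0, add_zero]
    abel

theorem phiHat_noncommProd (v : {i : Fin n // (i, m) ∈ α} → R)
    (s : Finset {i : Fin n // (i, m) ∈ α}) :
    (phiHat α hod hcα (s.noncommProd
        (fun i => PresentedGroup.of (⟨(i.1, m), i.2⟩, v i))
        (fun i _ i' _ _ => xcomm_all hod m v v i i'))).val.val =
      1 + ∑ i ∈ s, Matrix.single i.1 m (v i) := by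
  induction s using Finset.cons_induction with
  | empty =>
    erw [Finset.noncommProd_empty, map_one, Finset.sum_empty, add_zero]
    rfl
  | cons a s ha ih =>
    erw [Finset.noncommProd_cons, map_mul, Finset.sum_cons]
    have hval : (phiHat α hod hcα (PresentedGroup.of (⟨(a.1, m), a.2⟩, v a)) *
        phiHat α hod hcα (s.noncommProd
          (fun i => PresentedGroup.of (⟨(i.1, m), i.2⟩, v i))
          (fun i _ i' _ _ => xcomm_all hod m v v i i'))).val.val =
        (phiHat α hod hcα (PresentedGroup.of (⟨(a.1, m), a.2⟩, v a))).val.val *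
        (phiHat α hod hcα (s.noncommProd
          (fun i => PresentedGroup.of (⟨(i.1, m), i.2⟩, v i))
          (fun i _ i' _ _ => xcomm_all hod m v v i i'))).val.val := rfl
    rw [hval, ih]
    have hof : (phiHat α hod hcα (PresentedGroup.of (⟨(a.1, m), a.2⟩, v a))).val.val =
        elemMat a.1 m (v a) := by rw [phiHat_of]; rfl
    rw [hof]
    have h0 : Matrix.single a.1 m (v a) *
        ∑ i ∈ s, Matrix.single i.1 m (v i) = 0 := by
      rw [Finset.mul_sum]
      exact Finset.sum_eq_zero fun i _ =>
        Matrix.single_mul_single_of_ne _ _ _ _ (Ne.symm (hod _ i.2)) _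
    rw [elemMat, add_mul, one_mul, mul_add, mul_one, h0, add_zero]
    abel

theorem phiHat_Xprod (v : {i : Fin n // (i, m) ∈ α} → R) :
    (phiHat α hod hcα (Xprod hod m v)).val.val =
      1 + ∑ i : {i : Fin n // (i, m) ∈ α}, Matrix.single i.1 m (v i) := by
  rw [Xprod]
  exact phiHat_noncommProd hod m v Finset.univ

end Xp

/-! ### Compatibilities -/

theorem phiHat_stMap {α β : Set (Fin n × Fin n)}
    (hodα : ∀ p ∈ α, p.1 ≠ p.2) (hodβ : ∀ p ∈ β, p.1 ≠ p.2)
    {hcα : ∀ i j k : Fin n, (i, j) ∈ α → (j, k) ∈ α → i ≠ k → (i, k) ∈ α}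
    {hcβ : ∀ i j k : Fin n, (i, j) ∈ β → (j, k) ∈ β → i ≠ k → (i, k) ∈ β}
    (hsub : α ⊆ β) (s : PresentedGroup (stRels n R α hcα)) :
    (phiHat β hodβ hcβ (stMap hcα hcβ hsub s)).val = (phiHat α hodα hcα s).val := by
  have hhom : ((glSub R β).subtype.comp ((phiHat β hodβ hcβ).comp
      (stMap (R := R) hcα hcβ hsub))) = (glSub R α).subtype.comp (phiHat α hodα hcα) := by
    apply PresentedGroup.ext
    rintro ⟨p, r⟩
    show ((phiHat β hodβ hcβ (stMap hcα hcβ hsub (PresentedGroup.of (p, r))))).val =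
      ((phiHat α hodα hcα (PresentedGroup.of (p, r)))).val
    rw [stMap_of, phiHat_of, phiHat_of]
  exact DFunLike.congr_fun hhom s

theorem stMap_stMap {α β γ : Set (Fin n × Fin n)}
    {hcα : ∀ i j k : Fin n, (i, j) ∈ α → (j, k) ∈ α → i ≠ k → (i, k) ∈ α}
    {hcβ : ∀ i j k : Fin n, (i, j) ∈ β → (j, k) ∈ β → i ≠ k → (i, k) ∈ β}
    {hcγ : ∀ i j k : Fin n, (i, j) ∈ γ → (j, k) ∈ γ → i ≠ k → (i, k) ∈ γ}
    (h1 : α ⊆ β) (h2 : β ⊆ γ) (s : PresentedGroup (stRels n R α hcα)) :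
    stMap hcβ hcγ h2 (stMap hcα hcβ h1 s) = stMap hcα hcγ (h1.trans h2) s := by
  have hhom : ((stMap (R := R) hcβ hcγ h2).comp (stMap hcα hcβ h1)) =
      stMap hcα hcγ (h1.trans h2) := by
    apply PresentedGroup.ext
    rintro ⟨p, r⟩
    show stMap hcβ hcγ h2 (stMap hcα hcβ h1 (PresentedGroup.of (p, r))) = _
    rw [stMap_of, stMap_of, stMap_of]
  exact DFunLike.congr_fun hhom s

/-! ### Injectivity of `φ̂` for closed subsets -/

theorem phiHat_ker_aux : ∀ (N : ℕ) (α : Set (Fin n × Fin n)), α.ncard ≤ N →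
    ∀ (hα : IsClosedSubset α)
      (hcα : ∀ i j k : Fin n, (i, j) ∈ α → (j, k) ∈ α → i ≠ k → (i, k) ∈ α)
      (w : PresentedGroup (stRels n R α hcα)),
      phiHat α hα.1 hcα w = 1 → w = 1 := by
  intro N
  induction N with
  | zero =>
    intro α hcard hα hcα w _
    have hempty : α = ∅ := (Set.ncard_eq_zero α.toFinite).mp (Nat.le_zero.mp hcard)
    subst hempty
    have : w ∈ (⊥ : Subgroup (PresentedGroup (stRels n R (∅ : Set (Fin n × Fin n)) hcα))) :=
      PresentedGroup.generated_by _ _ (fun j => (Set.notMem_empty _ j.1.2).elim) w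
    simpa using this
  | succ N ih =>
    intro α hcard hα hcα w hw
    rcases Set.eq_empty_or_nonempty α with rfl | ⟨⟨i0, j0⟩, hij0⟩
    · have : w ∈ (⊥ : Subgroup (PresentedGroup (stRels n R (∅ : Set (Fin n × Fin n)) hcα))) :=
        PresentedGroup.generated_by _ _ (fun j => (Set.notMem_empty _ j.1.2).elim) w
      simpa using this
    · -- find a maximal column index m
      classical
      set T : Finset (Fin n) := Finset.univ.filter (fun j => ∃ i, (i, j) ∈ α) with hT
      have hTne : T.Nonempty := ⟨j0, by simp [hT]; exact ⟨i0, hij0⟩⟩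
      obtain ⟨m, hmT, hmax'⟩ := T.exists_max_image
        (fun j => (Finset.univ.filter (fun i => (i, j) ∈ α)).card) hTne
      obtain ⟨i1, hi1⟩ : ∃ i, (i, m) ∈ α := by simpa [hT] using hmT
      have hmax : ∀ k, (m, k) ∉ α := by
        intro k hk
        have hkT : k ∈ T := by simp [hT]; exact ⟨m, hk⟩
        have hss : Finset.univ.filter (fun i => (i, m) ∈ α) ⊂
            Finset.univ.filter (fun i => (i, k) ∈ α) := by
          rw [Finset.ssubset_iff_of_subset]
          · exact ⟨m, by simpa using hk, by simpa using (fun h => hα.1 (m, m) h rfl)⟩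
          · intro i hi
            simp only [Finset.mem_filter, Finset.mem_univ, true_and] at hi ⊢
            exact hα.2 i m k hi hk
        exact absurd (hmax' k hkT) (not_le.mpr (Finset.card_lt_card hss))
      -- the subset avoiding column m
      set α' : Set (Fin n × Fin n) := {p | p ∈ α ∧ p.2 ≠ m} with hα'def
      have hsubα : α' ⊆ α := fun p hp => hp.1
      have hα' : IsClosedSubset α' :=
        ⟨fun p hp => hα.1 p hp.1,
         fun i j k h1 h2 => ⟨hα.2 i j k h1.1 h2.1, h2.2⟩⟩
      have hcα' : ∀ i j k : Fin n, (i, j) ∈ α' → (j, k) ∈ α' → i ≠ k → (i, k) ∈ α' :=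
        fun i j k h1 h2 _ => hα'.2 i j k h1 h2
      have hcard' : α'.ncard ≤ N := by
        have hlt : α'.ncard < α.ncard :=
          Set.ncard_lt_ncard ⟨hsubα, fun hsup => (hsup hi1).2 rfl⟩ α.toFinite
        omega
      -- the inclusion homomorphism from St(α')
      set ι := stMap (R := R) hcα' hcα hsubα with hιdef
      set Xg : Set (PresentedGroup (stRels n R α hcα)) :=
        {g | ∃ (i : Fin n) (h : (i, m) ∈ α) (r : R),
          g = PresentedGroup.of (⟨(i, m), h⟩, r)} with hXgdef
      set X := Subgroup.closure Xg with hXdef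
      -- conjugation stability of X
      have hconj : ∀ (q : {p : Fin n × Fin n // p ∈ α} × R)
          (x : PresentedGroup (stRels n R α hcα)), x ∈ X →
          PresentedGroup.of q * x * (PresentedGroup.of q)⁻¹ ∈ X := by
        intro q x hx
        induction hx using Subgroup.closure_induction with
        | mem g hg =>
          obtain ⟨i, hi, r, rfl⟩ := hg
          obtain ⟨⟨⟨j, k⟩, hjk⟩, a⟩ := q
          have hjm : j ≠ m := fun h => hmax k (h ▸ hjk)
          by_cases hk : k = i
          · subst hk
            have hconj1 := st_conj (hcα := hcα) ⟨(j, k), hjk⟩ ⟨(k, m), hi⟩ rfl hjm a r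
            rw [hconj1]
            exact mul_mem (Subgroup.subset_closure ⟨j, hcα j k m hjk hi hjm, a * r, rfl⟩)
              (Subgroup.subset_closure ⟨k, hi, r, rfl⟩)
          · have hcom := st_comm (hcα := hcα) ⟨(j, k), hjk⟩ ⟨(i, m), hi⟩ hk hjm a r
            have heq : PresentedGroup.of (⟨(j, k), hjk⟩, a) *
                PresentedGroup.of (⟨(i, m), hi⟩, r) *
                (PresentedGroup.of (rels := stRels n R α hcα) (⟨(j, k), hjk⟩, a))⁻¹ =
                PresentedGroup.of (⟨(i, m), hi⟩, r) := by
              rw [hcom.eq]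
              group
            rw [heq]
            exact Subgroup.subset_closure ⟨i, hi, r, rfl⟩
        | one => simpa using one_mem X
        | mul x y hx hy px py =>
          have heq : PresentedGroup.of q * (x * y) * (PresentedGroup.of q)⁻¹ =
              PresentedGroup.of q * x * (PresentedGroup.of q)⁻¹ *
              (PresentedGroup.of q * y * (PresentedGroup.of q)⁻¹) := by group
          rw [heq]
          exact mul_mem px py
        | inv x hx px =>
          have heq : PresentedGroup.of q * x⁻¹ * (PresentedGroup.of q)⁻¹ =
              (PresentedGroup.of q * x * (PresentedGroup.of q)⁻¹)⁻¹ := by group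
          rw [heq]
          exact inv_mem px
      have hXnormal : X.Normal := by
        apply Subgroup.normalizer_eq_top_iff.mp
        rw [Subgroup.eq_top_iff']
        intro x
        refine PresentedGroup.generated_by _ _ (fun q => ?_) x
        obtain ⟨p, a⟩ := q
        rw [Subgroup.mem_normalizer_iff]
        intro h
        constructor
        · exact hconj (p, a) h
        · intro hh
          have h2 := hconj (p, -a) _ hh
          rw [← st_inv (hcα := hcα) p a] at h2
          have heq : (PresentedGroup.of (rels := stRels n R α hcα) (p, a))⁻¹ *
              (PresentedGroup.of (p, a) * h * (PresentedGroup.of (p, a))⁻¹) *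
              ((PresentedGroup.of (p, a))⁻¹)⁻¹ = h := by group
          rwa [heq] at h2
      haveI := hXnormal
      -- the decomposition of the whole group
      have htop : ι.range ⊔ X = ⊤ := by
        rw [Subgroup.eq_top_iff']
        intro x
        refine PresentedGroup.generated_by _ _ (fun q => ?_) x
        obtain ⟨⟨⟨i, j⟩, hij⟩, r⟩ := q
        by_cases hj : j = m
        · subst hj
          exact Subgroup.mem_sup_right (Subgroup.subset_closure ⟨i, hij, r, rfl⟩)
        · refine Subgroup.mem_sup_left ⟨PresentedGroup.of (⟨(i, j), ⟨hij, hj⟩⟩, r), ?_⟩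
          rw [hιdef, stMap_of]
      have hwmem : w ∈ (↑(ι.range ⊔ X) : Set (PresentedGroup (stRels n R α hcα))) := by
        rw [htop]
        trivial
      rw [Subgroup.mul_normal] at hwmem
      obtain ⟨s, hs, x, hx, rfl⟩ := hwmem
      obtain ⟨s', rfl⟩ := hs
      obtain ⟨v, rfl⟩ := mem_X_iff hα.1 m hx
      -- apply φ̂ and compute with matrices
      have hval : (phiHat α hα.1 hcα (ι s')).val.val *
          (phiHat α hα.1 hcα (Xprod hα.1 m v)).val.val = 1 := by
        have h3 : phiHat α hα.1 hcα (ι s') * phiHat α hα.1 hcα (Xprod hα.1 m v) = 1 := by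
          rw [← map_mul, hw]
        calc (phiHat α hα.1 hcα (ι s')).val.val *
            (phiHat α hα.1 hcα (Xprod hα.1 m v)).val.val
            = (phiHat α hα.1 hcα (ι s') * phiHat α hα.1 hcα (Xprod hα.1 m v)).val.val := rfl
          _ = 1 := by rw [h3]; rfl
      set M := (phiHat α hα.1 hcα (ι s')).val.val with hMdef
      set S := ∑ i : {i : Fin n // (i, m) ∈ α}, Matrix.single i.1 m (v i) with hSdef
      have hU : (phiHat α hα.1 hcα (Xprod hα.1 m v)).val.val = 1 + S :=
        phiHat_Xprod hα.1 m v
      rw [hU] at hval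
      have hSS : S * S = 0 := by
        rw [hSdef, Finset.sum_mul_sum]
        exact Finset.sum_eq_zero fun i _ => Finset.sum_eq_zero fun i' _ =>
          Matrix.single_mul_single_of_ne _ _ _ _ (Ne.symm (hα.1 _ i'.2)) _
      have hM1S : M = 1 - S := by
        have h2 : (1 + S) * (1 - S) = 1 := by
          rw [add_mul, one_mul, mul_sub, mul_one, hSS, sub_zero]
          abel
        calc M = M * ((1 + S) * (1 - S)) := by rw [h2, mul_one]
          _ = M * (1 + S) * (1 - S) := by rw [mul_assoc]
          _ = 1 - S := by rw [hval, one_mul]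
      have hunit : (phiHat α hα.1 hcα (ι s')).val = (phiHat α' hα'.1 hcα' s').val :=
        phiHat_stMap hα'.1 hα.1 hsubα s'
      have hMcol : M *ᵥ Pi.single m 1 = Pi.single m 1 := by
        rw [hMdef, hunit]
        exact glSub_fix_col (fun p hp => hp.2) (phiHat α' hα'.1 hcα' s').2
      have hv : v = 0 := by
        have hS0 : S *ᵥ Pi.single m (1 : R) = 0 := by
          rw [hM1S, Matrix.sub_mulVec, Matrix.one_mulVec] at hMcol
          exact sub_eq_self.mp hMcol
        funext i
        have h4 := congrFun hS0 i.1
        rw [Matrix.mulVec_single] at h4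
        simp only [Pi.smul_apply, MulOpposite.op_one, one_smul] at h4
        change S i.1 m = 0 at h4
        rw [hSdef] at h4
        rw [Matrix.sum_apply] at h4
        rw [Finset.sum_eq_single i] at h4
        · rw [Matrix.single_apply_same] at h4
          exact h4
        · intro k _ hki
          exact Matrix.single_apply_of_ne (i := k.1) (j := m) (c := v k)
            (i' := i.1) (j' := m) (fun hc => hki (Subtype.ext hc.1))
        · intro habs
          exact absurd (Finset.mem_univ i) habs
      have hx1 : Xprod (hcα := hcα) hα.1 m v = 1 := by
        rw [hv]
        exact Xprod_zero hα.1 m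
      have hM1 : M = 1 := by
        rw [hM1S, hSdef, hv]
        simp
      have hs'1 : s' = 1 := by
        refine ih α' hcard' hα' hcα' s' ?_
        apply Subtype.ext
        apply Units.ext
        show (phiHat α' hα'.1 hcα' s').val.val = 1
        rw [← hunit, ← hMdef, hM1]
      show ι s' * Xprod hα.1 m v = 1
      rw [hx1, hs'1, mul_one, map_one]

/-! ### Assembly -/

theorem phiHat_injective (α : Set (Fin n × Fin n)) (hα : IsClosedSubset α) (hcα) :
    Function.Injective (phiHat (n := n) (R := R) α hα.1 hcα) :=
  (injective_iff_map_eq_one _).mpr (phiHat_ker_aux α.ncard α le_rfl hα hcα)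

def hcOf {α : Set (Fin n × Fin n)} (hα : IsClosedSubset α) :
    ∀ i j k : Fin n, (i, j) ∈ α → (j, k) ∈ α → i ≠ k → (i, k) ∈ α :=
  fun i j k h1 h2 _ => hα.2 i j k h1 h2

/-- `St(α) ≃* GL_n(R)_α` for closed `α`. -/
noncomputable def stEquiv (α : Set (Fin n × Fin n)) (hα : IsClosedSubset α) :
    PresentedGroup (stRels n R α (hcOf hα)) ≃* glSub R α :=
  MulEquiv.ofBijective (phiHat α hα.1 (hcOf hα))
    ⟨phiHat_injective α hα (hcOf hα), phiHat_surjective α hα.1 (hcOf hα)⟩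

theorem stEquiv_of (α : Set (Fin n × Fin n)) (hα : IsClosedSubset α)
    (p : {p : Fin n × Fin n // p ∈ α}) (r : R) :
    stEquiv α hα (PresentedGroup.of (p, r)) =
      ⟨elemUnit p.1.1 p.1.2 (hα.1 _ p.2) r, elemUnit_mem _ _ p.2⟩ := by
  apply Subtype.ext
  exact phiHat_of (hcα := hcOf hα) hα.1 p r

theorem stEquiv_symm (α : Set (Fin n × Fin n)) (hα : IsClosedSubset α)
    (i j : Fin n) (hij : i ≠ j) (r : R) (hmem : (i, j) ∈ α)
    (hmem2 : elemUnit i j hij r ∈ glSub R α) :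
    (stEquiv α hα).symm ⟨elemUnit i j hij r, hmem2⟩ =
      PresentedGroup.of (⟨(i, j), hmem⟩, r) := by
  rw [MulEquiv.symm_apply_eq, stEquiv_of]

theorem closed_singleton {a b : Fin n} (hab : a ≠ b) :
    IsClosedSubset ({(a, b)} : Set (Fin n × Fin n)) := by
  constructor
  · rintro ⟨x, y⟩ hxy
    rw [Set.mem_singleton_iff, Prod.mk.injEq] at hxy
    obtain ⟨rfl, rfl⟩ := hxy
    exact hab
  · intro i j k h1 h2
    rw [Set.mem_singleton_iff, Prod.mk.injEq] at h1 h2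
    obtain ⟨rfl, rfl⟩ := h1
    exact absurd h2.1.symm hab

theorem closed_pair {a b c d : Fin n} (hab : a ≠ b) (hcd : c ≠ d) (h1 : b ≠ c) (h2 : a ≠ d) :
    IsClosedSubset ({(a, b), (c, d)} : Set (Fin n × Fin n)) := by
  constructor
  · rintro ⟨x, y⟩ hxy
    simp only [Set.mem_insert_iff, Set.mem_singleton_iff, Prod.mk.injEq] at hxy
    rcases hxy with ⟨rfl, rfl⟩ | ⟨rfl, rfl⟩ <;> assumption
  · intro i j k hh1 hh2
    simp only [Set.mem_insert_iff, Set.mem_singleton_iff, Prod.mk.injEq] at hh1 hh2 ⊢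
    rcases hh1 with ⟨rfl, rfl⟩ | ⟨rfl, rfl⟩ <;> rcases hh2 with ⟨h, rfl⟩ | ⟨h, rfl⟩
    · exact absurd h.symm hab
    · exact absurd h h1
    · exact absurd h.symm h2
    · exact absurd h.symm hcd

theorem closed_triple {i j l : Fin n} (hij : i ≠ j) (hjl : j ≠ l) (hil : i ≠ l) :
    IsClosedSubset ({(i, j), (j, l), (i, l)} : Set (Fin n × Fin n)) := by
  constructor
  · rintro ⟨x, y⟩ h
    simp only [Set.mem_insert_iff, Set.mem_singleton_iff, Prod.mk.injEq] at h
    rcases h with ⟨rfl, rfl⟩ | ⟨rfl, rfl⟩ | ⟨rfl, rfl⟩ <;> assumption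
  · intro a b c h1 h2
    simp only [Set.mem_insert_iff, Set.mem_singleton_iff, Prod.mk.injEq] at h1 h2 ⊢
    rcases h1 with ⟨rfl, rfl⟩ | ⟨rfl, rfl⟩ | ⟨rfl, rfl⟩ <;>
      rcases h2 with ⟨h, rfl⟩ | ⟨h, rfl⟩ | ⟨h, rfl⟩
    · exact absurd h.symm hij
    · exact Or.inr (Or.inr ⟨rfl, rfl⟩)
    · exact absurd h.symm hij
    · exact absurd h.symm hil
    · exact absurd h.symm hjl
    · exact absurd h.symm hil
    · exact absurd h.symm hil
    · exact absurd h.symm hjl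
    · exact absurd h.symm hil

/-! ### The homomorphism from the Steinberg group to the colimit -/

section GHom

variable {C : Type} [Group C]
  (κ : ∀ (α : Set (Fin n × Fin n)), IsClosedSubset α → (glSub R α →* C))

/-- Value of the would-be homomorphism `St_n(R) → C` on generators. -/
def gSing (q : {p : Fin n × Fin n // p ∈ deltaSet n} × R) : C :=
  κ {q.1.1} (closed_singleton q.1.2)
    ⟨elemUnit q.1.1.1 q.1.1.2 q.1.2 q.2, elemUnit_mem _ _ rfl⟩

variable (hκ : ∀ (α β : Set (Fin n × Fin n)) (hα : IsClosedSubset α) (hβ : IsClosedSubset β),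
      α ⊆ β → ∀ (x : (Matrix (Fin n) (Fin n) R)ˣ) (hxα : x ∈ glSub R α)
        (hxβ : x ∈ glSub R β), κ β hβ ⟨x, hxβ⟩ = κ α hα ⟨x, hxα⟩)

include hκ

theorem grels : ∀ w ∈ stRels n R (deltaSet n)
    (fun i _ k _ _ hik => show (i, k) ∈ deltaSet n from hik),
    FreeGroup.lift (gSing κ) w = 1 := by
  rintro w ((⟨p, a, b, rfl⟩ | ⟨p, q, a, b, h1, h2, rfl⟩) | ⟨p, q, a, b, h1, h2, rfl⟩)
  · simp only [map_mul, map_inv, FreeGroup.lift_apply_of]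
    show gSing κ (p, a) * gSing κ (p, b) * (gSing κ (p, a + b))⁻¹ = 1
    rw [gSing, gSing, gSing, ← map_inv, ← map_mul, ← map_mul]
    have he : ((⟨elemUnit p.1.1 p.1.2 p.2 a, elemUnit_mem _ _ rfl⟩ :  glSub R {p.1}) *
        ⟨elemUnit p.1.1 p.1.2 p.2 b, elemUnit_mem _ _ rfl⟩ *
        (⟨elemUnit p.1.1 p.1.2 p.2 (a + b), elemUnit_mem _ _ rfl⟩ :
          glSub R {p.1})⁻¹) = 1 := by
      apply Subtype.ext
      show elemUnit p.1.1 p.1.2 p.2 a * elemUnit p.1.1 p.1.2 p.2 b *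
        (elemUnit p.1.1 p.1.2 p.2 (a + b))⁻¹ = 1
      erw [elemUnit_mul_same]
      exact mul_inv_cancel _
    rw [he, map_one]
  · obtain ⟨⟨⟨i, j⟩, hp⟩, rfl⟩ : ∃ p' , p' = p := ⟨p, rfl⟩
    obtain ⟨⟨⟨k, l⟩, hq⟩, rfl⟩ : ∃ q' , q' = q := ⟨q, rfl⟩
    simp only at h1 h2
    have hγ : IsClosedSubset ({(i, j), (k, l)} : Set (Fin n × Fin n)) :=
      closed_pair hp hq h1 h2
    have hmp : ((i, j) : Fin n × Fin n) ∈ ({(i, j), (k, l)} : Set (Fin n × Fin n)) :=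
      Set.mem_insert _ _
    have hmq : ((k, l) : Fin n × Fin n) ∈ ({(i, j), (k, l)} : Set (Fin n × Fin n)) :=
      Set.mem_insert_iff.mpr (Or.inr rfl)
    simp only [map_commutatorElement, map_mul, map_inv, FreeGroup.lift_apply_of,
      commutatorElement_def]
    show gSing κ (⟨(i, j), hp⟩, a) * gSing κ (⟨(k, l), hq⟩, b) *
      (gSing κ (⟨(i, j), hp⟩, a))⁻¹ * (gSing κ (⟨(k, l), hq⟩, b))⁻¹ = 1
    have e1 : gSing κ (⟨(i, j), hp⟩, a) = κ _ hγ ⟨elemUnit i j hp a, elemUnit_mem _ _ hmp⟩ :=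
      (hκ {(i, j)} _ (closed_singleton hp) hγ (Set.singleton_subset_iff.mpr hmp) _ _ _).symm
    have e2 : gSing κ (⟨(k, l), hq⟩, b) = κ _ hγ ⟨elemUnit k l hq b, elemUnit_mem _ _ hmq⟩ :=
      (hκ {(k, l)} _ (closed_singleton hq) hγ (Set.singleton_subset_iff.mpr hmq) _ _ _).symm
    rw [e1, e2, ← map_inv, ← map_inv, ← map_mul, ← map_mul, ← map_mul]
    have he : ((⟨elemUnit i j hp a, elemUnit_mem _ _ hmp⟩ :
          glSub R {(i, j), (k, l)}) *
        ⟨elemUnit k l hq b, elemUnit_mem _ _ hmq⟩ *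
        (⟨elemUnit i j hp a, elemUnit_mem _ _ hmp⟩ :
          glSub R {(i, j), (k, l)})⁻¹ *
        (⟨elemUnit k l hq b, elemUnit_mem _ _ hmq⟩ :
          glSub R {(i, j), (k, l)})⁻¹) = 1 := by
      apply Subtype.ext
      show elemUnit i j hp a * elemUnit k l hq b * (elemUnit i j hp a)⁻¹ *
        (elemUnit k l hq b)⁻¹ = 1
      rw [elemUnit_comm i j k l hp hq h1 h2]
      group
    rw [he, map_one]
  · obtain ⟨⟨⟨i, j⟩, hp⟩, rfl⟩ : ∃ p' , p' = p := ⟨p, rfl⟩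
    obtain ⟨⟨⟨j', l⟩, hq⟩, rfl⟩ : ∃ q' , q' = q := ⟨q, rfl⟩
    simp only at h1 h2
    subst h1
    have hil : i ≠ l := h2
    have hij : i ≠ j := hp
    have hjl : j ≠ l := hq
    have hγ : IsClosedSubset ({(i, j), (j, l), (i, l)} : Set (Fin n × Fin n)) :=
      closed_triple hij hjl hil
    have hmp : ((i, j) : Fin n × Fin n) ∈
        ({(i, j), (j, l), (i, l)} : Set (Fin n × Fin n)) := Set.mem_insert _ _
    have hmq : ((j, l) : Fin n × Fin n) ∈
        ({(i, j), (j, l), (i, l)} : Set (Fin n × Fin n)) :=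
      Set.mem_insert_iff.mpr (Or.inr (Set.mem_insert _ _))
    have hmr : ((i, l) : Fin n × Fin n) ∈
        ({(i, j), (j, l), (i, l)} : Set (Fin n × Fin n)) :=
      Set.mem_insert_iff.mpr (Or.inr (Set.mem_insert_iff.mpr (Or.inr rfl)))
    simp only [map_commutatorElement, map_mul, map_inv, FreeGroup.lift_apply_of,
      commutatorElement_def]
    show gSing κ (⟨(i, j), hp⟩, a) * gSing κ (⟨(j, l), hq⟩, b) *
      (gSing κ (⟨(i, j), hp⟩, a))⁻¹ * (gSing κ (⟨(j, l), hq⟩, b))⁻¹ *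
      (gSing κ (⟨(i, l), _⟩, a * b))⁻¹ = 1
    have e1 : gSing κ (⟨(i, j), hp⟩, a) = κ _ hγ ⟨elemUnit i j hp a, elemUnit_mem _ _ hmp⟩ :=
      (hκ {(i, j)} _ (closed_singleton hp) hγ (Set.singleton_subset_iff.mpr hmp) _ _ _).symm
    have e2 : gSing κ (⟨(j, l), hq⟩, b) = κ _ hγ ⟨elemUnit j l hq b, elemUnit_mem _ _ hmq⟩ :=
      (hκ {(j, l)} _ (closed_singleton hq) hγ (Set.singleton_subset_iff.mpr hmq) _ _ _).symm
    have e3 : gSing κ (⟨(i, l), hil⟩, a * b) =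
        κ _ hγ ⟨elemUnit i l hil (a * b), elemUnit_mem _ _ hmr⟩ :=
      (hκ {(i, l)} _ (closed_singleton hil) hγ (Set.singleton_subset_iff.mpr hmr) _ _ _).symm
    rw [e1, e2, e3, ← map_inv, ← map_inv, ← map_inv, ← map_mul, ← map_mul, ← map_mul,
      ← map_mul]
    have he : ((⟨elemUnit i j hp a, elemUnit_mem _ _ hmp⟩ :
          glSub R {(i, j), (j, l), (i, l)}) *
        ⟨elemUnit j l hq b, elemUnit_mem _ _ hmq⟩ *
        (⟨elemUnit i j hp a, elemUnit_mem _ _ hmp⟩ :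
          glSub R {(i, j), (j, l), (i, l)})⁻¹ *
        (⟨elemUnit j l hq b, elemUnit_mem _ _ hmq⟩ :
          glSub R {(i, j), (j, l), (i, l)})⁻¹ *
        (⟨elemUnit i l hil (a * b), elemUnit_mem _ _ hmr⟩ :
          glSub R {(i, j), (j, l), (i, l)})⁻¹) = 1 := by
      apply Subtype.ext
      show elemUnit i j hp a * elemUnit j l hq b * (elemUnit i j hp a)⁻¹ *
        (elemUnit j l hq b)⁻¹ * (elemUnit i l hil (a * b))⁻¹ = 1
      rw [elemUnit_comp i j l hij hjl hil]
      group
    rw [he, map_one]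

/-- The canonical homomorphism `St_n(R) → C`. -/
noncomputable def gHom : Steinberg n R →* C :=
  PresentedGroup.toGroup (grels κ hκ)

theorem gHom_of (q : {p : Fin n × Fin n // p ∈ deltaSet n} × R) :
    gHom κ hκ (PresentedGroup.of q) = gSing κ q :=
  PresentedGroup.toGroup.of _

end GHom

/-- let `c : colim_{α ∈ Φ} GL_n(R)_α → GL_n(R)` be the canonical homomorphism
induced by the inclusions `GL_n(R)_α ≤ GL_n(R)`.  Then `Ker c` is isomorphic to `K₂(n,R)`,
the kernel of the homomorphism `φ : St_n(R) → GL_n(R)` sending `x_{ij}(r)` to `ε_{ij}(r)`.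
Here the colimit is represented by an arbitrary group `C` together with a cocone
`κ_α : GL_n(R)_α → C` that is compatible with the inclusions `GL_n(R)_α ↪ GL_n(R)_β` and
satisfies the universal property of the colimit, and `c` is pinned down by the requirement
`c ∘ κ_α = (inclusion of GL_n(R)_α into GL_n(R))`. -/
theorem ker_colimit_iso_K2 (n : ℕ) (R : Type) [Ring R]
    (C : Type) [Group C]
    (κ : ∀ (α : Set (Fin n × Fin n)), IsClosedSubset α → (glSub R α →* C))
    (hκ : ∀ (α β : Set (Fin n × Fin n)) (hα : IsClosedSubset α) (hβ : IsClosedSubset β),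
      α ⊆ β → ∀ (x : (Matrix (Fin n) (Fin n) R)ˣ) (hxα : x ∈ glSub R α)
        (hxβ : x ∈ glSub R β), κ β hβ ⟨x, hxβ⟩ = κ α hα ⟨x, hxα⟩)
    (huniv : ∀ (G : Type) [Group G]
      (f : ∀ α : Set (Fin n × Fin n), IsClosedSubset α → (glSub R α →* G)),
      (∀ (α β : Set (Fin n × Fin n)) (hα : IsClosedSubset α) (hβ : IsClosedSubset β),
        α ⊆ β → ∀ (x : (Matrix (Fin n) (Fin n) R)ˣ) (hxα : x ∈ glSub R α)
          (hxβ : x ∈ glSub R β), f β hβ ⟨x, hxβ⟩ = f α hα ⟨x, hxα⟩) →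
      ∃! h : C →* G,
        ∀ (α : Set (Fin n × Fin n)) (hα : IsClosedSubset α) (x : glSub R α),
          h (κ α hα x) = f α hα x)
    (c : C →* (Matrix (Fin n) (Fin n) R)ˣ)
    (hc : ∀ (α : Set (Fin n × Fin n)) (hα : IsClosedSubset α) (x : glSub R α),
      c (κ α hα x) = x.1)
    (φ : Steinberg n R →* (Matrix (Fin n) (Fin n) R)ˣ)
    (hφ : ∀ (p : {p : Fin n × Fin n // p ∈ deltaSet n}) (r : R),
      φ (PresentedGroup.of (p, r)) = elemUnit p.1.1 p.1.2 p.2 r) :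
    Nonempty (c.ker ≃* φ.ker) := by
  classical
  have hsubΔ : ∀ {α : Set (Fin n × Fin n)}, IsClosedSubset α → α ⊆ deltaSet n :=
    fun hα p hp => hα.1 p hp
  -- The compatible family of maps `GL_n(R)_α → St_n(R)`.
  let F : ∀ α : Set (Fin n × Fin n), IsClosedSubset α → (glSub R α →* Steinberg n R) :=
    fun α hα => (stMap (hcOf hα) (fun i _ k _ _ hik => hik) (hsubΔ hα)).comp
      (stEquiv α hα).symm.toMonoidHom
  have hFdef : ∀ (α : Set (Fin n × Fin n)) (hα : IsClosedSubset α) (x : glSub R α),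
      F α hα x = stMap (hcOf hα) (fun i _ k _ _ hik => hik) (hsubΔ hα)
        ((stEquiv α hα).symm x) := fun _ _ _ => rfl
  have hFcompat : ∀ (α β : Set (Fin n × Fin n)) (hα : IsClosedSubset α)
      (hβ : IsClosedSubset β), α ⊆ β →
      ∀ (x : (Matrix (Fin n) (Fin n) R)ˣ) (hxα : x ∈ glSub R α) (hxβ : x ∈ glSub R β),
      F β hβ ⟨x, hxβ⟩ = F α hα ⟨x, hxα⟩ := by
    intro α β hα hβ hsub x hxα hxβ
    rw [hFdef, hFdef]
    have hs : (stEquiv β hβ).symm ⟨x, hxβ⟩ =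
        stMap (hcOf hα) (hcOf hβ) hsub ((stEquiv α hα).symm ⟨x, hxα⟩) := by
      rw [MulEquiv.symm_apply_eq]
      apply Subtype.ext
      symm
      have hval := phiHat_stMap (R := R) hα.1 hβ.1 (hcα := hcOf hα) (hcβ := hcOf hβ)
        hsub ((stEquiv α hα).symm ⟨x, hxα⟩)
      calc ((stEquiv β hβ (stMap (hcOf hα) (hcOf hβ) hsub
              ((stEquiv α hα).symm ⟨x, hxα⟩))) : glSub R β).val
          = (phiHat β hβ.1 (hcOf hβ) (stMap (hcOf hα) (hcOf hβ) hsub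
              ((stEquiv α hα).symm ⟨x, hxα⟩))).val := rfl
        _ = (phiHat α hα.1 (hcOf hα) ((stEquiv α hα).symm ⟨x, hxα⟩)).val := hval
        _ = ((stEquiv α hα ((stEquiv α hα).symm ⟨x, hxα⟩)) : glSub R α).val := rfl
        _ = (⟨x, hxβ⟩ : glSub R β).val :=
            congrArg Subtype.val ((stEquiv α hα).apply_symm_apply ⟨x, hxα⟩)
    erw [hs, stMap_stMap]
  -- The induced map `h : C → St_n(R)` and the map `g : St_n(R) → C`.
  obtain ⟨h, hhF, huniqh⟩ := huniv (Steinberg n R) F hFcompat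
  let g : Steinberg n R →* C := gHom κ hκ
  -- `φ ∘ F α = inclusion`
  have hφstMap : ∀ (α : Set (Fin n × Fin n)) (hα : IsClosedSubset α),
      φ.comp (stMap (hcOf hα) (fun i _ k _ _ hik => hik) (hsubΔ hα)) =
        (glSub R α).subtype.comp (phiHat α hα.1 (hcOf hα)) := by
    intro α hα
    apply PresentedGroup.ext
    rintro ⟨p, r⟩
    show φ (stMap (hcOf hα) _ (hsubΔ hα) (PresentedGroup.of (p, r))) =
      (phiHat α hα.1 (hcOf hα) (PresentedGroup.of (p, r))).val
    rw [stMap_of, hφ, phiHat_of]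
  have hφF : ∀ (α : Set (Fin n × Fin n)) (hα : IsClosedSubset α) (x : glSub R α),
      φ (F α hα x) = x.val := by
    intro α hα x
    rw [hFdef]
    have h5 := DFunLike.congr_fun (hφstMap α hα) ((stEquiv α hα).symm x)
    simp only [MonoidHom.comp_apply] at h5
    rw [h5]
    exact congrArg Subtype.val ((stEquiv α hα).apply_symm_apply x)
  -- `g ∘ F α = κ α`
  have hgF : ∀ (α : Set (Fin n × Fin n)) (hα : IsClosedSubset α) (x : glSub R α),
      g (F α hα x) = κ α hα x := by
    intro α hα x
    have hcomp : g.comp (stMap (hcOf hα) (fun i _ k _ _ hik => hik) (hsubΔ hα)) =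
        (κ α hα).comp (stEquiv α hα).toMonoidHom := by
      apply PresentedGroup.ext
      rintro ⟨p, r⟩
      show g (stMap (hcOf hα) _ (hsubΔ hα) (PresentedGroup.of (p, r))) =
        κ α hα (stEquiv α hα (PresentedGroup.of (p, r)))
      rw [stMap_of, stEquiv_of]
      show gHom κ hκ (PresentedGroup.of (⟨p.1, hsubΔ hα p.2⟩, r)) = _
      rw [gHom_of κ hκ, gSing]
      exact (hκ {p.1} α (closed_singleton (hα.1 _ p.2)) hα
        (Set.singleton_subset_iff.mpr p.2) _ _ _).symm
    rw [hFdef]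
    have := DFunLike.congr_fun hcomp ((stEquiv α hα).symm x)
    simp only [MonoidHom.comp_apply] at this
    rw [this]
    congr 1
    exact (stEquiv α hα).apply_symm_apply x
  -- `h ∘ g = id` on the Steinberg group.
  have hhg : ∀ y : Steinberg n R, h (g y) = y := by
    have hcomp : h.comp g = MonoidHom.id (Steinberg n R) := by
      apply PresentedGroup.ext
      rintro ⟨p, r⟩
      show h (g (PresentedGroup.of (p, r))) = PresentedGroup.of (p, r)
      have hg1 : g (PresentedGroup.of (p, r)) = gSing κ (p, r) := gHom_of κ hκ (p, r)
      rw [hg1, gSing]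
      rw [hhF {p.1} (closed_singleton p.2)]
      rw [hFdef]
      rw [stEquiv_symm {p.1} (closed_singleton p.2) p.1.1 p.1.2 p.2 r rfl]
      erw [stMap_of]
    intro y
    exact DFunLike.congr_fun hcomp y
  -- `g ∘ h = id` on `C`.
  have hgh : ∀ x : C, g (h x) = x := by
    obtain ⟨e2, he2, huniqe2⟩ := huniv C κ hκ
    have h1 : g.comp h = e2 := huniqe2 _ (fun α hα x => by
      show g (h (κ α hα x)) = κ α hα x
      rw [hhF α hα x, hgF α hα x])
    have h2 : MonoidHom.id C = e2 := huniqe2 _ (fun α hα x => rfl)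
    intro x
    have := DFunLike.congr_fun (h1.trans h2.symm) x
    exact this
  -- `φ ∘ h = c`.
  have hφh : ∀ x : C, φ (h x) = c x := by
    obtain ⟨e3, he3, huniqe3⟩ := huniv ((Matrix (Fin n) (Fin n) R)ˣ)
      (fun α _ => (glSub R α).subtype) (fun α β hα hβ hsub x hxα hxβ => rfl)
    have h1 : φ.comp h = e3 := huniqe3 _ (fun α hα x => by
      show φ (h (κ α hα x)) = x.val
      rw [hhF α hα x, hφF α hα x])
    have h2 : c = e3 := huniqe3 _ (fun α hα x => hc α hα x)
    intro x
    exact DFunLike.congr_fun (h1.trans h2.symm) x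
  -- `c ∘ g = φ`.
  have hcg : ∀ y : Steinberg n R, c (g y) = φ y := by
    intro y
    conv_rhs => rw [← hhg y]
    rw [hφh (g y)]
  -- Assemble the isomorphism of kernels.
  refine ⟨{ toFun := fun x => ⟨h x.1, ?_⟩,
            invFun := fun y => ⟨g y.1, ?_⟩,
            left_inv := ?_, right_inv := ?_, map_mul' := ?_ }⟩
  · rw [MonoidHom.mem_ker, hφh]
    exact x.2
  · rw [MonoidHom.mem_ker, hcg]
    exact y.2
  · intro x
    apply Subtype.ext
    exact hgh x.1
  · intro y
    apply Subtype.ext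
    exact hhg y.1
  · intro x y
    apply Subtype.ext
    exact map_mul h x.1 y.1
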